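/- If (M, Enc, φ) generates M' and (M', Enc', φ') generates N, then (M, φ⁻¹(Enc'), φ' ∘ φ|_{φ⁻¹(Enc')}) generates N. In other words, the relation 'generates' between Turing machines is transitive under composition of decoders. -/

import Mathlib

/-- When run from any configuration, the machine passes through `Enc` infinitely often. -/
def PassesInfOften {C : Type*} (step : C → C) (Enc : Set C) : Prop :=
  ∀ x : C, ∀ n : ℕ, ∃ m : ℕ, n < m ∧ step^[m] x ∈ Enc

/-- `(M, Enc, φ)` generates `M'`: φ is a surjective decoder from encodings onto the
configurations of `M'`, `M` passes through `Enc` infinitely often, and the first-return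
map to `Enc` commutes with the step function of `M'` via φ. -/
def Generates {C C' : Type*} (step : C → C) (step' : C' → C')
    (Enc : Set C) (φ : C → C') : Prop :=
  Set.SurjOn φ Enc Set.univ ∧
  PassesInfOften step Enc ∧
  ∀ x ∈ Enc, ∀ t : ℕ, 0 < t → step^[t] x ∈ Enc →
    (∀ s : ℕ, 0 < s → s < t → step^[s] x ∉ Enc) →
    φ (step^[t] x) = step' (φ x)

/-- Iterate correspondence: any return to `Enc` maps under φ to some iterate of `step'`,
with intermediate `step'`-iterates realized as intermediate returns. -/
lemma lemA {C C' : Type*} (step : C → C) (step' : C' → C')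
    (Enc : Set C) (φ : C → C') (h1 : Generates step step' Enc φ) :
    ∀ t : ℕ, ∀ x ∈ Enc, step^[t] x ∈ Enc →
      ∃ k : ℕ, φ (step^[t] x) = step'^[k] (φ x) ∧ (0 < t → 0 < k) ∧
        ∀ j, 0 < j → j < k →
          ∃ s, 0 < s ∧ s < t ∧ step^[s] x ∈ Enc ∧ step'^[j] (φ x) = φ (step^[s] x) := by
  intro t
  induction t using Nat.strong_induction_on with
  | _ t IH =>
    intro x hx hxt
    rcases Nat.eq_zero_or_pos t with h0 | hpos
    · subst h0
      exact ⟨0, by simp, by simp, fun j hj hjk => absurd hjk (by omega)⟩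
    · classical
      have hex : ∃ s, 0 < s ∧ s ≤ t ∧ step^[s] x ∈ Enc := ⟨t, hpos, le_refl _, hxt⟩
      set s₁ := Nat.find hex with hs₁def
      obtain ⟨hs₁pos, hs₁le, hs₁mem⟩ := Nat.find_spec hex
      have hfirst : ∀ s, 0 < s → s < s₁ → step^[s] x ∉ Enc := by
        intro s hs hlt hmem
        exact Nat.find_min hex hlt ⟨hs, le_trans hlt.le hs₁le, hmem⟩
      have hstep : φ (step^[s₁] x) = step' (φ x) :=
        h1.2.2 x hx s₁ hs₁pos hs₁mem hfirst
      rcases eq_or_lt_of_le hs₁le with heq | hlt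
      · refine ⟨1, ?_, fun _ => one_pos, fun j hj hjk => absurd hjk (by omega)⟩
        rw [← heq, hstep]
        simp
      · set y := step^[s₁] x with hydef
        set t' := t - s₁ with ht'def
        have hty : step^[t'] y = step^[t] x := by
          rw [hydef, ← Function.iterate_add_apply]
          congr 1
          omega
        have hymem : step^[t'] y ∈ Enc := hty ▸ hxt
        obtain ⟨k', hφk, hk'pos, hint⟩ := IH t' (by omega) y hs₁mem hymem
        have hk' : 0 < k' := hk'pos (by omega)
        refine ⟨k' + 1, ?_, fun _ => by omega, ?_⟩
        · rw [← hty, hφk, hstep, Function.iterate_succ_apply]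
        · intro j hj hjk
          rcases Nat.lt_or_ge j 2 with hj1 | hj2
          · have : j = 1 := by omega
            subst this
            exact ⟨s₁, hs₁pos, hlt, hs₁mem, by rw [Function.iterate_one, ← hstep, hydef]⟩
          · obtain ⟨s', hs'pos, hs'lt, hs'mem, hs'φ⟩ := hint (j - 1) (by omega) (by omega)
            refine ⟨s₁ + s', by omega, by omega, ?_, ?_⟩
            · rw [add_comm, Function.iterate_add_apply]
              exact hs'mem
            · have hj' : j = (j - 1) + 1 := by omega
              rw [hj', Function.iterate_succ_apply, ← hstep, hs'φ, hydef,
                Nat.add_comm s₁ s', Function.iterate_add_apply]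

/-- Any iterate of `step'` starting from `φ y` with `y ∈ Enc` is realized as φ of a
return of `y` to `Enc`. -/
lemma lemB {C C' : Type*} (step : C → C) (step' : C' → C')
    (Enc : Set C) (φ : C → C') (h1 : Generates step step' Enc φ) :
    ∀ k : ℕ, ∀ y ∈ Enc, ∃ T : ℕ, (0 < k → 0 < T) ∧ step^[T] y ∈ Enc ∧
      φ (step^[T] y) = step'^[k] (φ y) := by
  intro k
  induction k with
  | zero => intro y hy; exact ⟨0, by omega, by simpa using hy, by simp⟩
  | succ k IH =>
    intro y hy
    obtain ⟨T, _, hTmem, hTφ⟩ := IH y hy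
    classical
    obtain ⟨m, hm, hmmem⟩ := h1.2.1 (step^[T] y) 0
    have hex : ∃ m', 0 < m' ∧ step^[m'] (step^[T] y) ∈ Enc := ⟨m, hm, hmmem⟩
    set m₁ := Nat.find hex with hm₁def
    obtain ⟨hm₁pos, hm₁mem⟩ := Nat.find_spec hex
    have hfirst : ∀ s, 0 < s → s < m₁ → step^[s] (step^[T] y) ∉ Enc := by
      intro s hs hlt hmem
      exact Nat.find_min hex hlt ⟨hs, hmem⟩
    have hstep : φ (step^[m₁] (step^[T] y)) = step' (φ (step^[T] y)) :=
      h1.2.2 (step^[T] y) hTmem m₁ hm₁pos hm₁mem hfirst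
    refine ⟨m₁ + T, by omega, ?_, ?_⟩
    · rw [Function.iterate_add_apply]; exact hm₁mem
    · rw [Function.iterate_add_apply, hstep, hTφ, Function.iterate_succ_apply']

/-- if (M, Enc, φ) generates M' and (M', Enc', φ') generates N, then
(M, φ⁻¹(Enc'), φ' ∘ φ) generates N. -/
theorem stmt11 {C C' C'' : Type*} (step : C → C) (step' : C' → C') (step'' : C'' → C'')
    (Enc : Set C) (φ : C → C') (Enc' : Set C') (φ' : C' → C'')
    (h1 : Generates step step' Enc φ) (h2 : Generates step' step'' Enc' φ') :
    Generates step step'' (Enc ∩ φ ⁻¹' Enc') (φ' ∘ φ) := by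
  refine ⟨?_, ?_, ?_⟩
  · -- surjectivity
    intro z _
    obtain ⟨y, hy, hyz⟩ := h2.1 (Set.mem_univ z)
    obtain ⟨x, hx, hxy⟩ := h1.1 (Set.mem_univ y)
    exact ⟨x, ⟨hx, by simp [Set.mem_preimage, hxy, hy]⟩, by simp [hxy, hyz]⟩
  · -- passes infinitely often
    intro x n
    obtain ⟨m0, hm0, hmem⟩ := h1.2.1 x n
    obtain ⟨k, hk, hk'⟩ := h2.2.1 (φ (step^[m0] x)) 0
    obtain ⟨T, _, hTmem, hTφ⟩ := lemB step step' Enc φ h1 k (step^[m0] x) hmem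
    refine ⟨T + m0, by omega, ?_, ?_⟩
    · rw [Function.iterate_add_apply]; exact hTmem
    · rw [Set.mem_preimage, Function.iterate_add_apply, hTφ]; exact hk'
  · -- first-return commutes
    rintro x ⟨hxE, hxE'⟩ t ht htmem hno
    obtain ⟨k, hφk, hkpos, hint⟩ := lemA step step' Enc φ h1 t x hxE htmem.1
    have hk : 0 < k := hkpos ht
    have hkmem : step'^[k] (φ x) ∈ Enc' := by
      rw [← hφk]; exact htmem.2
    have hnone : ∀ j, 0 < j → j < k → step'^[j] (φ x) ∉ Enc' := by
      intro j hj hjk hmem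
      obtain ⟨s, hs, hst, hsmem, hsφ⟩ := hint j hj hjk
      exact hno s hs hst ⟨hsmem, by rwa [Set.mem_preimage, ← hsφ]⟩
    have := h2.2.2 (φ x) hxE' k hk hkmem hnone
    simp only [Function.comp_apply, hφk, this]
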